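/- (Tail sum estimate for the long-range forcing term.) There exists a constant C > 0 such that for all integers K ≥ 1 and all integers i with 1 ≤ i ≤ K, one has Σ_{j = K+1}^{∞} j^{2/3}/(j − i)² ≤ C K^{2/3}/(K − i + 1). -/

import Mathlib

open Real

private lemma rpow_two_thirds_add_le (x y : ℝ) (hx : 0 ≤ x) (hy : 0 ≤ y) :
    (x + y) ^ ((2:ℝ)/3) ≤ x ^ ((2:ℝ)/3) + y ^ ((2:ℝ)/3) := by
  have h := NNReal.rpow_add_le_add_rpow (Real.toNNReal x) (Real.toNNReal y)
    (by norm_num : (0:ℝ) ≤ 2/3) (by norm_num : (2:ℝ)/3 ≤ 1)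
  have h' := (NNReal.coe_le_coe).2 h
  rw [← Real.toNNReal_add hx hy] at h'
  simpa [NNReal.coe_rpow, Real.coe_toNNReal _ hx, Real.coe_toNNReal _ hy,
    Real.coe_toNNReal _ (add_nonneg hx hy)] using h'

private lemma cube_ineq {a b : ℝ} (ha : 0 < a) (hb : 0 < b) (hba : b ≤ a)
    (heq : (a - b) * (a^2 + a*b + b^2) = a^3 * b^3) (h2 : a^3 ≤ 2 * b^3) :
    a^4 ≤ 6 * (a - b) := by
  have h3 : a^3 * b^3 ≤ (a - b) * (3 * a^2) := by
    nlinarith [mul_nonneg (mul_nonneg (sub_nonneg.2 hba) (sub_nonneg.2 hba))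
      (by positivity : (0:ℝ) ≤ 2*a + b)]
  have hpos : (0:ℝ) < a^2 * b^3 := by positivity
  have hmain : a^4 * (a^2 * b^3) ≤ 6 * (a - b) * (a^2 * b^3) := by
    nlinarith [mul_le_mul_of_nonneg_left h2 (by positivity : (0:ℝ) ≤ a^3 * b^3),
      mul_le_mul_of_nonneg_left h3 (by positivity : (0:ℝ) ≤ 2 * b^3)]
  exact le_of_mul_le_mul_right hmain hpos

private lemma tail_step (K i j : ℕ) (hK : 1 ≤ K) (hiK : i ≤ K) (hj : K + 1 ≤ j) :
    (j : ℝ) ^ ((2:ℝ)/3) / ((j:ℝ) - (i:ℝ))^2 ≤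
      (2 * (K:ℝ)^((2:ℝ)/3) / ((j:ℝ) - (i:ℝ)) + 6 * ((j:ℝ) - (i:ℝ)) ^ (-(1:ℝ)/3))
      - (2 * (K:ℝ)^((2:ℝ)/3) / ((j:ℝ) + 1 - (i:ℝ)) + 6 * ((j:ℝ) + 1 - (i:ℝ)) ^ (-(1:ℝ)/3)) := by
  have hKj : (K:ℝ) + 1 ≤ (j:ℝ) := by exact_mod_cast hj
  have hiK' : (i:ℝ) ≤ (K:ℝ) := by exact_mod_cast hiK
  set x : ℝ := (j:ℝ) - (i:ℝ) with hxdef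
  have hx1eq : (j:ℝ) + 1 - (i:ℝ) = x + 1 := by rw [hxdef]; ring
  rw [hx1eq]
  have hx1 : 1 ≤ x := by rw [hxdef]; linarith
  have hx0 : 0 < x := by linarith
  have hx10 : 0 < x + 1 := by linarith
  have hKnn : (0:ℝ) ≤ (K:ℝ) := Nat.cast_nonneg K
  have hA : (j:ℝ)^((2:ℝ)/3) ≤ x^((2:ℝ)/3) + (K:ℝ)^((2:ℝ)/3) := by
    have hjle : (j:ℝ) ≤ x + K := by rw [hxdef]; linarith
    calc (j:ℝ)^((2:ℝ)/3) ≤ (x + K)^((2:ℝ)/3) :=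
          Real.rpow_le_rpow (Nat.cast_nonneg j) hjle (by norm_num)
      _ ≤ x^((2:ℝ)/3) + (K:ℝ)^((2:ℝ)/3) := rpow_two_thirds_add_le _ _ hx0.le hKnn
  have hB : (K:ℝ)^((2:ℝ)/3) / x^2 ≤ 2*(K:ℝ)^((2:ℝ)/3)/x - 2*(K:ℝ)^((2:ℝ)/3)/(x+1) := by
    have h1 : 1 / x^2 ≤ 2/x - 2/(x+1) := by
      rw [div_sub_div _ _ hx0.ne' hx10.ne', div_le_div_iff₀ (by positivity) (by positivity)]
      nlinarith
    calc (K:ℝ)^((2:ℝ)/3)/x^2 = (K:ℝ)^((2:ℝ)/3) * (1/x^2) := by ring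
      _ ≤ (K:ℝ)^((2:ℝ)/3) * (2/x - 2/(x+1)) :=
          mul_le_mul_of_nonneg_left h1 (Real.rpow_nonneg hKnn _)
      _ = 2*(K:ℝ)^((2:ℝ)/3)/x - 2*(K:ℝ)^((2:ℝ)/3)/(x+1) := by ring
  have hC : x^((2:ℝ)/3) / x^2 ≤ 6 * x^(-(1:ℝ)/3) - 6 * (x+1)^(-(1:ℝ)/3) := by
    set a := x ^ (-(1:ℝ)/3) with hadef
    set b := (x+1) ^ (-(1:ℝ)/3) with hbdef
    have ha : 0 < a := Real.rpow_pos_of_pos hx0 _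
    have hb : 0 < b := Real.rpow_pos_of_pos hx10 _
    have ha3 : a^3 = x⁻¹ := by
      rw [hadef, ← Real.rpow_natCast (x ^ (-(1:ℝ)/3)) 3, ← Real.rpow_mul hx0.le]
      norm_num [Real.rpow_neg_one]
    have hb3 : b^3 = (x+1)⁻¹ := by
      rw [hbdef, ← Real.rpow_natCast ((x+1) ^ (-(1:ℝ)/3)) 3, ← Real.rpow_mul hx10.le]
      norm_num [Real.rpow_neg_one]
    have hcube : b^3 ≤ a^3 := by
      rw [ha3, hb3]
      exact inv_anti₀ hx0 (by linarith)
    have hba : b ≤ a := le_of_pow_le_pow_left₀ (by norm_num) ha.le hcube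
    have heq : (a - b) * (a^2 + a*b + b^2) = a^3 * b^3 := by
      have expand : (a - b) * (a^2 + a*b + b^2) = a^3 - b^3 := by ring
      rw [expand, ha3, hb3]
      field_simp
      ring
    have h2 : a^3 ≤ 2 * b^3 := by
      rw [ha3, hb3]
      rw [inv_eq_one_div, inv_eq_one_div, mul_one_div, div_le_div_iff₀ hx0 hx10]
      linarith
    have hx4 : x^((2:ℝ)/3)/x^2 = a^4 := by
      rw [hadef, ← Real.rpow_natCast (x ^ (-(1:ℝ)/3)) 4, ← Real.rpow_mul hx0.le,
          ← Real.rpow_natCast x 2, ← Real.rpow_sub hx0]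
      norm_num
    rw [hx4]
    have := cube_ineq ha hb hba heq h2
    linarith
  have hx2 : (0:ℝ) < x^2 := by positivity
  have hsplit : (j:ℝ)^((2:ℝ)/3)/x^2 ≤ (x^((2:ℝ)/3) + (K:ℝ)^((2:ℝ)/3))/x^2 :=
    (div_le_div_iff_of_pos_right hx2).2 hA
  rw [add_div] at hsplit
  linarith

/-- Tail sum estimate for the long-range forcing term. -/
theorem tail_sum_forcing :
    ∃ C : ℝ, 0 < C ∧
      ∀ K : ℕ, 1 ≤ K → ∀ i : ℕ, 1 ≤ i → i ≤ K →
        (∑' j : ℕ, if K + 1 ≤ j then (j : ℝ) ^ ((2 : ℝ) / 3) / ((j : ℝ) - (i : ℝ)) ^ 2 else 0) ≤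
          C * (K : ℝ) ^ ((2 : ℝ) / 3) / ((K : ℝ) - (i : ℝ) + 1) := by
  refine ⟨14, by norm_num, ?_⟩
  intro K hK i hi1 hiK
  have hiK' : (i:ℝ) ≤ (K:ℝ) := by exact_mod_cast hiK
  have hi1' : (1:ℝ) ≤ (i:ℝ) := by exact_mod_cast hi1
  set f : ℕ → ℝ := fun j => if K + 1 ≤ j then (j : ℝ) ^ ((2:ℝ)/3) / ((j:ℝ) - (i:ℝ))^2 else 0
    with hf
  set g : ℕ → ℝ := fun n =>
    2*(K:ℝ)^((2:ℝ)/3)/((n:ℝ)-(i:ℝ)) + 6*((n:ℝ)-(i:ℝ))^(-(1:ℝ)/3) with hg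
  have hf0 : ∀ j, 0 ≤ f j := by
    intro j
    simp only [hf]
    split
    · positivity
    · exact le_rfl
  have key : ∀ N : ℕ, ∑ j ∈ Finset.range (K+1+N), f j ≤ g (K+1) - g (K+1+N) := by
    intro N
    induction N with
    | zero =>
      have hz : ∑ j ∈ Finset.range (K+1+0), f j = 0 := by
        apply Finset.sum_eq_zero
        intro j hj
        have hj' : j < K + 1 + 0 := Finset.mem_range.1 hj
        simp only [hf]
        rw [if_neg (by omega)]
      rw [hz]
      simp
    | succ N ih =>
      have hrange : K+1+(N+1) = (K+1+N) + 1 := rfl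
      rw [hrange, Finset.sum_range_succ]
      have hstep := tail_step K i (K+1+N) hK hiK (by omega)
      have hfval : f (K+1+N) =
          ((K+1+N:ℕ):ℝ) ^ ((2:ℝ)/3) / (((K+1+N:ℕ):ℝ) - (i:ℝ))^2 := by
        simp only [hf]
        rw [if_pos (by omega)]
      have hcast : (((K+1+N)+1 : ℕ):ℝ) = ((K+1+N:ℕ):ℝ) + 1 := by push_cast; ring
      have hgval : g ((K+1+N)+1) =
          2*(K:ℝ)^((2:ℝ)/3)/(((K+1+N:ℕ):ℝ) + 1 - (i:ℝ))
            + 6*(((K+1+N:ℕ):ℝ) + 1 - (i:ℝ))^(-(1:ℝ)/3) := by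
        simp only [hg, hcast]
      have hgval2 : g (K+1+N) =
          2*(K:ℝ)^((2:ℝ)/3)/(((K+1+N:ℕ):ℝ) - (i:ℝ))
            + 6*(((K+1+N:ℕ):ℝ) - (i:ℝ))^(-(1:ℝ)/3) := by
        simp only [hg]
      rw [hfval, hgval]
      rw [hgval2] at ih
      linarith [ih, hstep]
  have hg_nonneg : ∀ N : ℕ, 0 ≤ g (K+1+N) := by
    intro N
    have hx : (0:ℝ) < ((K+1+N:ℕ):ℝ) - (i:ℝ) := by push_cast; linarith
    simp only [hg]
    have h1 : 0 ≤ 2*(K:ℝ)^((2:ℝ)/3)/(((K+1+N:ℕ):ℝ)-(i:ℝ)) :=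
      div_nonneg (by positivity) hx.le
    have h2 : 0 ≤ 6*(((K+1+N:ℕ):ℝ)-(i:ℝ))^(-(1:ℝ)/3) :=
      mul_nonneg (by norm_num) (Real.rpow_nonneg hx.le _)
    linarith
  set M : ℝ := (K:ℝ) - (i:ℝ) + 1 with hM
  have hM0 : 0 < M := by rw [hM]; linarith
  have hM1 : M ≤ (K:ℝ) := by rw [hM]; linarith
  have hfinal : g (K+1) ≤ 14 * (K:ℝ)^((2:ℝ)/3) / M := by
    have hM' : ((K+1:ℕ):ℝ) - (i:ℝ) = M := by rw [hM]; push_cast; ring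
    have hgK : g (K+1) = 2*(K:ℝ)^((2:ℝ)/3)/M + 6*M^(-(1:ℝ)/3) := by
      simp only [hg, hM']
    have e0 : M^((2:ℝ)/3) = M^(-(1:ℝ)/3) * M := by
      rw [← Real.rpow_add_one hM0.ne']
      norm_num
    have e1 : M^(-(1:ℝ)/3) = M^((2:ℝ)/3)/M := by
      rw [e0, mul_div_assoc, div_self hM0.ne', mul_one]
    have e2 : M^((2:ℝ)/3) ≤ (K:ℝ)^((2:ℝ)/3) :=
      Real.rpow_le_rpow hM0.le hM1 (by norm_num)
    have e3 : 6*M^(-(1:ℝ)/3) ≤ 6*(K:ℝ)^((2:ℝ)/3)/M := by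
      rw [e1, mul_div_assoc]
      exact mul_le_mul_of_nonneg_left ((div_le_div_iff_of_pos_right hM0).2 e2) (by norm_num)
    have e4 : 2*(K:ℝ)^((2:ℝ)/3)/M + 6*(K:ℝ)^((2:ℝ)/3)/M ≤ 14*(K:ℝ)^((2:ℝ)/3)/M := by
      rw [← add_div]
      apply (div_le_div_iff_of_pos_right hM0).2
      nlinarith [Real.rpow_nonneg (Nat.cast_nonneg K) ((2:ℝ)/3)]
    rw [hgK]
    linarith
  apply tsum_le_of_sum_le' (by positivity)
  intro s
  obtain ⟨n, hn⟩ := s.exists_nat_subset_range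
  calc ∑ j ∈ s, f j ≤ ∑ j ∈ Finset.range (K+1+n), f j := by
        apply Finset.sum_le_sum_of_subset_of_nonneg
        · exact hn.trans (Finset.range_subset_range.2 (by omega))
        · intro j _ _; exact hf0 j
    _ ≤ g (K+1) - g (K+1+n) := key n
    _ ≤ g (K+1) := by linarith [hg_nonneg n]
    _ ≤ 14 * (K:ℝ)^((2:ℝ)/3) / M := hfinal
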